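/- (Estimate on the transition coefficients) For every integer k with |k| ≥ 1 there exists a constant C_k > 0 such that for every ρ ∈ (−1,1) and every integer n with |n| ≥ 2|k|, one has |μ_{nk}(ρ)| ≤ C_k · |n|^{|k|} · |ρ|^{|n|/2}. -/

import Mathlib

/-- The transition coefficients
`μ_{nk}(ρ) = (1−ρ²)² (1/(2πi)) ∮_{|z|=1} (1+ρz)^{n−2} (z+ρ)^{−(n+2)} z^{k+1} dz`. -/
noncomputable def muCoef (ρ : ℝ) (n k : ℤ) : ℂ :=
  (1 - (ρ : ℂ) ^ 2) ^ 2 * (1 / (2 * Real.pi * Complex.I)) *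
    ∮ z in C(0, 1), (1 + (ρ : ℂ) * z) ^ (n - 2) * (z + (ρ : ℂ)) ^ (-(n + 2)) * z ^ (k + 1)

open Complex MeasureTheory Metric Finset Set

namespace MuAux

lemma circleMap_zero_one_ne (θ : ℝ) : circleMap 0 1 θ ≠ 0 :=
  circleMap_ne_center one_ne_zero

lemma circleMap_neg_eq_inv (θ : ℝ) : circleMap 0 1 (-θ) = (circleMap 0 1 θ)⁻¹ := by
  simp only [circleMap, zero_add, one_mul]
  rw [show (((-θ : ℝ) : ℂ) * I) = -((θ : ℝ) * I) by push_cast; ring, Complex.exp_neg]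
  simp

lemma circleIntegral_inv (f : ℂ → ℂ) :
    (∮ z in C(0, 1), f z) = ∮ z in C(0, 1), z ^ (-2 : ℤ) * f z⁻¹ := by
  simp only [circleIntegral, deriv_circleMap, smul_eq_mul]
  set F : ℝ → ℂ := fun θ => circleMap 0 1 θ * I * f (circleMap 0 1 θ) with hFdef
  have hF : Function.Periodic F (2 * Real.pi) := fun θ => by
    simp only [hFdef, periodic_circleMap 0 1 θ]
  have key : ∀ θ : ℝ, circleMap 0 1 θ * I *
      (circleMap 0 1 θ ^ (-2 : ℤ) * f (circleMap 0 1 θ)⁻¹) = F (-θ) := by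
    intro θ
    have hz := circleMap_zero_one_ne θ
    simp only [hFdef, circleMap_neg_eq_inv]
    rw [zpow_neg, zpow_two]
    field_simp
  calc (∫ θ in (0:ℝ)..2 * Real.pi, circleMap 0 1 θ * I * f (circleMap 0 1 θ))
      = ∫ θ in (0:ℝ)..2 * Real.pi, F θ := rfl
    _ = ∫ θ in (-(2 * Real.pi))..(-(2 * Real.pi) + 2 * Real.pi), F θ := by
        rw [hF.intervalIntegral_add_eq (-(2 * Real.pi)) 0]
        norm_num
    _ = ∫ θ in (-(2 * Real.pi) : ℝ)..0, F θ := by norm_num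
    _ = ∫ θ in (0:ℝ)..2 * Real.pi, F (-θ) := by
        rw [intervalIntegral.integral_comp_neg]
        norm_num
    _ = ∫ θ in (0:ℝ)..2 * Real.pi, circleMap 0 1 θ * I *
          (circleMap 0 1 θ ^ (-2 : ℤ) * f (circleMap 0 1 θ)⁻¹) := by
        simp only [key]


lemma circleIntegral_finset_sum {ι : Type*} (s : Finset ι) (f : ι → ℂ → ℂ)
    (h : ∀ i ∈ s, CircleIntegrable (f i) 0 1) :
    (∮ z in C(0, 1), ∑ i ∈ s, f i z) = ∑ i ∈ s, ∮ z in C(0, 1), f i z := by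
  simp only [circleIntegral]
  rw [show (fun θ : ℝ => deriv (circleMap 0 1) θ • ∑ i ∈ s, f i (circleMap 0 1 θ)) =
      fun θ : ℝ => ∑ i ∈ s, deriv (circleMap 0 1) θ • f i (circleMap 0 1 θ) from
      funext fun θ => Finset.smul_sum]
  exact intervalIntegral.integral_finset_sum fun i hi => (h i hi).out

lemma sub_ne_zero_on_sphere {a : ℂ} (ha : ‖a‖ < 1) {z : ℂ} (hz : z ∈ sphere (0:ℂ) 1) :
    z - a ≠ 0 := by
  simp only [mem_sphere_iff_norm, sub_zero] at hz
  intro h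
  rw [sub_eq_zero] at h
  rw [h] at hz
  exact absurd hz (ne_of_lt ha)

lemma ne_zero_on_sphere {z : ℂ} (hz : z ∈ sphere (0:ℂ) 1) : z ≠ 0 := by
  simp only [mem_sphere_iff_norm, sub_zero] at hz
  intro h; rw [h] at hz; simp at hz

/-- Lemma A: residue formula for `z^p (z-a)^{-q}` with `p ≥ 0`. -/
lemma integral_pow_mul_sub_zpow {a : ℂ} (ha : ‖a‖ < 1) (p q : ℕ) (hq : 1 ≤ q) :
    (∮ z in C(0, 1), z ^ p * (z - a) ^ (-(q : ℤ))) =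
      (2 * Real.pi * I) * (p.choose (q - 1)) * a ^ (p - (q - 1)) := by
  have h1 : (∮ z in C(0, 1), z ^ p * (z - a) ^ (-(q : ℤ))) =
      ∮ z in C(0, 1), ∑ j ∈ range (p + 1),
        ((p.choose j : ℂ) * a ^ (p - j)) * (z - a) ^ ((j : ℤ) - q) := by
    refine circleIntegral.integral_congr one_pos.le fun z hz => ?_
    have hza := sub_ne_zero_on_sphere ha hz
    have hzp : z ^ p = ∑ j ∈ range (p + 1), (z - a) ^ j * a ^ (p - j) * (p.choose j : ℂ) := by
      conv_lhs => rw [show z = (z - a) + a by ring]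
      exact add_pow _ _ _
    rw [hzp, Finset.sum_mul]
    refine Finset.sum_congr rfl fun j hj => ?_
    have : (z - a) ^ ((j : ℤ) - q) = (z - a) ^ j * (z - a) ^ (-(q : ℤ)) := by
      rw [show (j : ℤ) - q = (j : ℤ) + (-(q : ℤ)) by ring, zpow_add₀ hza, zpow_natCast]
    rw [this]; ring
  rw [h1, circleIntegral_finset_sum]
  · have h2 : ∀ j ∈ range (p + 1),
        (∮ z in C(0, 1), ((p.choose j : ℂ) * a ^ (p - j)) * (z - a) ^ ((j : ℤ) - q)) =
        if j = q - 1 then (2 * Real.pi * I) * (p.choose j : ℂ) * a ^ (p - j) else 0 := by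
      intro j _
      rw [show (fun z : ℂ => ((p.choose j : ℂ) * a ^ (p - j)) * (z - a) ^ ((j : ℤ) - q)) =
          fun z : ℂ => ((p.choose j : ℂ) * a ^ (p - j)) • (z - a) ^ ((j : ℤ) - q) from
          funext fun z => (smul_eq_mul _ _).symm, circleIntegral.integral_smul]
      by_cases hj : j = q - 1
      · subst hj
        rw [show ((q - 1 : ℕ) : ℤ) - q = -1 by omega]
        simp only [zpow_neg_one]
        rw [circleIntegral.integral_sub_inv_of_mem_ball (by simpa using ha)]
        simp [smul_eq_mul]; ring
      · rw [circleIntegral.integral_sub_zpow_of_ne (by omega), smul_zero, if_neg hj]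
    rw [Finset.sum_congr rfl h2, Finset.sum_ite_eq' (range (p + 1)) (q - 1)
      (fun j => (2 * Real.pi * I) * (p.choose j : ℂ) * a ^ (p - j))]
    by_cases hqp : q - 1 ∈ range (p + 1)
    · rw [if_pos hqp]
    · rw [if_neg hqp]
      rw [Finset.mem_range, not_lt] at hqp
      rw [Nat.choose_eq_zero_of_lt (by omega)]
      simp
  · intro j _
    have : CircleIntegrable (fun z : ℂ => (z - a) ^ ((j : ℤ) - q)) 0 1 := by
      rw [circleIntegrable_sub_zpow_iff]
      right; right
      simp only [abs_one, mem_sphere_iff_norm, sub_zero]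
      exact ne_of_lt ha
    exact this.const_mul _


lemma one_sub_mul_ne {a w : ℂ} (ha : ‖a‖ < 1) (hw : ‖w‖ ≤ 1) : (1 : ℂ) - a * w ≠ 0 := by
  intro h
  have h1 : (1 : ℂ) = a * w := by linear_combination h
  have h2 : (1 : ℝ) = ‖a‖ * ‖w‖ := by rw [← norm_mul, ← h1]; simp
  nlinarith [norm_nonneg a, norm_nonneg w]

/-- Lemma B: `z^p (z-a)^{-q}` with `p < 0` integrates to zero. -/
lemma integral_zpow_mul_sub_zpow_neg {a : ℂ} (ha : ‖a‖ < 1) (p : ℤ) (hp : p < 0)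
    (q : ℕ) (hq : 1 ≤ q) :
    (∮ z in C(0, 1), z ^ p * (z - a) ^ (-(q : ℤ))) = 0 := by
  rw [circleIntegral_inv (fun z => z ^ p * (z - a) ^ (-(q : ℤ)))]
  have key : EqOn (fun w : ℂ => w ^ (-2 : ℤ) * ((w⁻¹) ^ p * (w⁻¹ - a) ^ (-(q : ℤ))))
      (fun w : ℂ => w ^ ((q : ℤ) - p - 2).toNat * ((1 - a * w) ^ q)⁻¹) (sphere 0 1) := by
    intro w hw
    have hw0 : w ≠ 0 := ne_zero_on_sphere hw
    have hwn : ‖w‖ = 1 := by simpa [mem_sphere_iff_norm] using hw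
    have hw1 : (1 : ℂ) - a * w ≠ 0 := one_sub_mul_ne ha (le_of_eq hwn)
    have h1 : w⁻¹ - a = w⁻¹ * (1 - a * w) := by field_simp
    simp only
    rw [h1, mul_zpow, ← zpow_neg_one, ← zpow_mul]
    rw [show (-1 : ℤ) * p = -p by ring]
    rw [show ((w ^ (-1 : ℤ)) ^ (-(q : ℤ)) : ℂ) = w ^ ((-1 : ℤ) * (-(q : ℤ))) by rw [zpow_mul]]
    rw [show (-1 : ℤ) * (-(q : ℤ)) = (q : ℤ) by ring]
    have hq2 : ((((q : ℤ) - p - 2).toNat : ℤ)) = (q : ℤ) - p - 2 := by omega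
    calc w ^ (-2 : ℤ) * (w ^ (-p) * (w ^ (q : ℤ) * (1 - a * w) ^ (-(q : ℤ))))
        = w ^ ((-2 : ℤ) + (-p + (q : ℤ))) * (1 - a * w) ^ (-(q : ℤ)) := by
          rw [zpow_add₀ hw0, zpow_add₀ hw0]; ring
      _ = w ^ (((q : ℤ) - p - 2).toNat) * ((1 - a * w) ^ q)⁻¹ := by
          rw [show (-2 : ℤ) + (-p + (q : ℤ)) = (q : ℤ) - p - 2 by ring,
            ← zpow_natCast w (((q : ℤ) - p - 2).toNat), hq2, zpow_neg, zpow_natCast]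
  rw [circleIntegral.integral_congr one_pos.le key]
  have hdiff : ∀ w : ℂ, ‖w‖ ≤ 1 →
      DifferentiableAt ℂ (fun w : ℂ => w ^ ((q : ℤ) - p - 2).toNat * ((1 - a * w) ^ q)⁻¹) w := by
    intro w hw
    have hw1 : (1 : ℂ) - a * w ≠ 0 := one_sub_mul_ne ha hw
    apply DifferentiableAt.mul
    · exact differentiableAt_pow _
    · exact (((differentiableAt_const _).sub ((differentiableAt_const _).mul
        differentiableAt_id)).pow _).inv (pow_ne_zero _ hw1)
  refine circleIntegral_eq_zero_of_differentiable_on_off_countable one_pos.le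
    Set.countable_empty ?_ ?_
  · intro w hw
    have hw' : ‖w‖ ≤ 1 := by simpa [Metric.mem_closedBall, Complex.dist_eq] using hw
    exact (hdiff w hw').continuousAt.continuousWithinAt
  · intro w hw
    have hw' : ‖w‖ ≤ 1 := by
      have := hw.1
      simp only [Metric.mem_ball, Complex.dist_eq, sub_zero] at this
      exact le_of_lt (by simpa using this)
    exact hdiff w hw'

lemma circleIntegral_const_mul (c : ℂ) (f : ℂ → ℂ) :
    (∮ z in C(0, 1), c * f z) = c * ∮ z in C(0, 1), f z := by
  simpa only [smul_eq_mul] using circleIntegral.integral_smul c f 0 1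

/-- Explicit formula for the contour integral appearing in `muCoef`, `n = N ≥ 2`. -/
lemma muIntegral_formula (ρ : ℝ) (hρ : |ρ| < 1) (N : ℕ) (hN : 2 ≤ N) (k : ℤ) :
    (∮ z in C(0, 1), (1 + (ρ : ℂ) * z) ^ ((N : ℤ) - 2) * (z + (ρ : ℂ)) ^ (-((N : ℤ) + 2)) *
        z ^ (k + 1)) =
      ∑ i ∈ range (N - 1), ((N - 2).choose i : ℂ) * (ρ : ℂ) ^ i *
        (if 0 ≤ (i : ℤ) + (k + 1) then
          (2 * Real.pi * I) * ((((i : ℤ) + (k + 1)).toNat).choose (N + 1) : ℂ) *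
            (-(ρ : ℂ)) ^ ((((i : ℤ) + (k + 1)).toNat) - (N + 1))
        else 0) := by
  set a : ℂ := -(ρ : ℂ) with ha_def
  have ha : ‖a‖ < 1 := by
    rw [ha_def, norm_neg, Complex.norm_real, Real.norm_eq_abs]
    exact hρ
  have step1 : (∮ z in C(0, 1), (1 + (ρ : ℂ) * z) ^ ((N : ℤ) - 2) *
        (z + (ρ : ℂ)) ^ (-((N : ℤ) + 2)) * z ^ (k + 1)) =
      ∮ z in C(0, 1), ∑ i ∈ range (N - 1), ((N - 2).choose i : ℂ) * (ρ : ℂ) ^ i *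
        (z ^ ((i : ℤ) + (k + 1)) * (z - a) ^ (-((N + 2 : ℕ) : ℤ))) := by
    refine circleIntegral.integral_congr one_pos.le fun z hz => ?_
    have hz0 : z ≠ 0 := ne_zero_on_sphere hz
    rw [show z + (ρ : ℂ) = z - a by rw [ha_def]; ring,
      show ((N : ℤ) - 2) = ((N - 2 : ℕ) : ℤ) by omega, zpow_natCast,
      show (-((N : ℤ) + 2)) = -((N + 2 : ℕ) : ℤ) by push_cast; ring,
      add_comm (1 : ℂ) ((ρ : ℂ) * z), add_pow, show N - 2 + 1 = N - 1 by omega,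
      Finset.sum_mul, Finset.sum_mul]
    refine Finset.sum_congr rfl fun i hi => ?_
    have hsplit : z ^ ((i : ℤ) + (k + 1)) = z ^ (i : ℕ) * z ^ (k + 1) := by
      rw [zpow_add₀ hz0, zpow_natCast]
    rw [hsplit, mul_pow, one_pow]
    ring
  rw [step1, circleIntegral_finset_sum]
  · refine Finset.sum_congr rfl fun i hi => ?_
    rw [circleIntegral_const_mul]
    by_cases hik : 0 ≤ (i : ℤ) + (k + 1)
    · rw [if_pos hik]
      have hexp : (i : ℤ) + (k + 1) = ((((i : ℤ) + (k + 1)).toNat : ℕ) : ℤ) := by omega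
      rw [hexp]
      simp only [zpow_natCast]
      rw [integral_pow_mul_sub_zpow ha (((i : ℤ) + (k + 1)).toNat) (N + 2) (by omega)]
      rfl
    · rw [if_neg hik, integral_zpow_mul_sub_zpow_neg ha _ (by omega) (N + 2) (by omega),
        mul_zero]
  · intro i hi
    refine ContinuousOn.circleIntegrable one_pos.le ?_
    refine continuousOn_const.mul (ContinuousOn.mul ?_ ?_)
    · exact continuousOn_id.zpow₀ _ fun z hz => Or.inl (ne_zero_on_sphere hz)
    · exact (continuousOn_id.sub continuousOn_const).zpow₀ _
        fun z hz => Or.inl (sub_ne_zero_on_sphere ha hz)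

set_option maxHeartbeats 1000000 in
lemma core_bound (k : ℤ) (hk : 1 ≤ |k|) (ρ : ℝ) (hρ : ρ ∈ Set.Ioo (-1 : ℝ) 1)
    (N : ℕ) (hN : 2 * |k| ≤ (N : ℤ)) :
    ‖muCoef ρ (N : ℤ) k‖ ≤ ((|k|.toNat : ℝ) * 2 ^ |k|.toNat) * (N : ℝ) ^ |k|.toNat *
      |ρ| ^ ((N : ℝ) / 2) := by
  obtain ⟨hρ1, hρ2⟩ := hρ
  have hρabs : |ρ| < 1 := abs_lt.mpr ⟨hρ1, hρ2⟩
  set K : ℕ := |k|.toNat with hKdef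
  have hKk : (K : ℤ) = |k| := Int.toNat_of_nonneg (abs_nonneg k)
  have hkK : k ≤ (K : ℤ) := by rw [hKk]; exact le_abs_self k
  have hkK' : -k ≤ (K : ℤ) := by rw [hKk]; exact neg_le_abs k
  have h1K : (1 : ℤ) ≤ (K : ℤ) := by rw [hKk]; exact hk
  have hNK : 2 * (K : ℤ) ≤ (N : ℤ) := by rw [hKk]; exact hN
  have hK1 : 1 ≤ K := by omega
  have hN2 : 2 ≤ N := by omega
  set r : ℝ := |ρ| ^ ((N : ℝ) / 2) with hr_def
  have hr0 : 0 ≤ r := Real.rpow_nonneg (abs_nonneg ρ) _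
  set B : ℝ := 2 * Real.pi * ((2 ^ K * (N : ℝ) ^ K) * r) with hB_def
  have hB0 : 0 ≤ B := by positivity
  set f : ℕ → ℂ := fun i => ((N - 2).choose i : ℂ) * (ρ : ℂ) ^ i *
    (if 0 ≤ (i : ℤ) + (k + 1) then
      (2 * Real.pi * I) * ((((i : ℤ) + (k + 1)).toNat).choose (N + 1) : ℂ) *
        (-(ρ : ℂ)) ^ ((((i : ℤ) + (k + 1)).toNat) - (N + 1))
    else 0) with hf_def
  have hform : muCoef ρ (N : ℤ) k = (1 - (ρ : ℂ) ^ 2) ^ 2 * (1 / (2 * Real.pi * I)) *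
      ∑ i ∈ range (N - 1), f i := by
    rw [muCoef, muIntegral_formula ρ hρabs N hN2 k]
  have hpre1 : ‖(1 - (ρ : ℂ) ^ 2) ^ 2‖ ≤ 1 := by
    have h0 : (1 - (ρ : ℂ) ^ 2) = ((1 - ρ ^ 2 : ℝ) : ℂ) := by push_cast; ring
    rw [h0, norm_pow, Complex.norm_real, Real.norm_eq_abs]
    have h1 : 0 ≤ ρ ^ 2 := sq_nonneg ρ
    have h2 : ρ ^ 2 ≤ 1 := by nlinarith
    have h3 : |1 - ρ ^ 2| ≤ 1 := by rw [abs_le]; constructor <;> nlinarith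
    nlinarith [abs_nonneg (1 - ρ ^ 2)]
  have h2pi : ‖(2 * (Real.pi : ℂ) * I)‖ = 2 * Real.pi := by
    simp [norm_mul, Complex.norm_real, Real.norm_eq_abs,
      _root_.abs_of_nonneg Real.pi_nonneg]
  have hpre2 : ‖(1 / (2 * (Real.pi : ℂ) * I))‖ = 1 / (2 * Real.pi) := by
    rw [norm_div, norm_one, h2pi]
  -- bound each term on the filtered set
  have hterm : ∀ i ∈ (range (N - 1)).filter (fun i : ℕ => (N : ℤ) + 1 ≤ (i : ℤ) + (k + 1)),
      ‖f i‖ ≤ B := by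
    intro i hi
    rw [Finset.mem_filter, Finset.mem_range] at hi
    obtain ⟨hiN, hik⟩ := hi
    have hik0 : 0 ≤ (i : ℤ) + (k + 1) := by omega
    obtain ⟨P, hPval⟩ : ∃ P : ℕ, (P : ℤ) = (i : ℤ) + (k + 1) := ⟨((i:ℤ)+(k+1)).toNat, by omega⟩
    have hPtoNat : ((i : ℤ) + (k + 1)).toNat = P := by omega
    have hPN : N + 1 ≤ P := by omega
    have hiN2 : i ≤ N - 2 := by omega
    obtain ⟨e1, he1⟩ : ∃ e1 : ℕ, (e1 : ℤ) = (N : ℤ) - 2 - i := ⟨((N:ℤ)-2-i).toNat, by omega⟩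
    obtain ⟨e2, he2⟩ : ∃ e2 : ℕ, (e2 : ℤ) = (P : ℤ) - (N + 1) := ⟨((P:ℤ)-(N+1)).toNat, by omega⟩
    have he1' : e1 = N - 2 - i := by omega
    have he2' : e2 = P - (N + 1) := by omega
    have hnorm : ‖f i‖ = ((N - 2).choose i : ℝ) * |ρ| ^ i *
        (2 * Real.pi * ((P.choose (N + 1) : ℝ) * |ρ| ^ e2)) := by
      rw [hf_def]
      simp only [if_pos hik0, hPtoNat, ← he2']
      rw [norm_mul, norm_mul, norm_mul, norm_mul, norm_pow, norm_pow, h2pi,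
        Complex.norm_natCast, Complex.norm_natCast, norm_neg, Complex.norm_real,
        Real.norm_eq_abs]
      ring
    rw [hnorm]
    have hchoose : (N - 2).choose i * P.choose (N + 1) ≤ 2 ^ K * N ^ K := by
      have hc1 : (N - 2).choose i = (N - 2).choose e1 := by
        rw [he1']; exact (Nat.choose_symm hiN2).symm
      have hc2 : P.choose (N + 1) = P.choose e2 := by
        rw [he2']; exact (Nat.choose_symm hPN).symm
      have hb1 : (N - 2).choose e1 ≤ N ^ e1 :=
        le_trans (Nat.choose_le_pow _ _) (Nat.pow_le_pow_left (by omega) _)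
      have hb2 : P.choose e2 ≤ (2 * N) ^ e2 :=
        le_trans (Nat.choose_le_pow _ _) (Nat.pow_le_pow_left (by omega) _)
      have he12a : e1 + e2 ≤ K := by omega
      have he12b : e2 ≤ K := by omega
      calc (N - 2).choose i * P.choose (N + 1) ≤ N ^ e1 * (2 * N) ^ e2 := by
            rw [hc1, hc2]; exact Nat.mul_le_mul hb1 hb2
        _ = 2 ^ e2 * N ^ (e1 + e2) := by rw [Nat.mul_pow, pow_add]; ring
        _ ≤ 2 ^ K * N ^ K := Nat.mul_le_mul (Nat.pow_le_pow_right (by omega) he12b)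
            (Nat.pow_le_pow_right (by omega) he12a)
    have hchooseR : ((N - 2).choose i : ℝ) * (P.choose (N + 1) : ℝ) ≤
        2 ^ K * (N : ℝ) ^ K := by exact_mod_cast hchoose
    have hrho : |ρ| ^ i * |ρ| ^ e2 ≤ r := by
      rw [← pow_add]
      rcases eq_or_ne ρ 0 with rfl | hne
      · rw [abs_zero, zero_pow (by omega), hr_def, abs_zero,
          Real.zero_rpow (by positivity)]
      · rw [hr_def, ← Real.rpow_natCast |ρ| (i + e2)]
        refine Real.rpow_le_rpow_of_exponent_ge (abs_pos.2 hne) hρabs.le ?_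
        have hNle : (N : ℤ) ≤ 2 * ((i : ℤ) + e2) := by omega
        rw [div_le_iff₀ (by norm_num : (0:ℝ) < 2)]
        push_cast
        have : (N : ℝ) ≤ 2 * ((i : ℝ) + (e2 : ℝ)) := by exact_mod_cast hNle
        linarith
    calc ((N - 2).choose i : ℝ) * |ρ| ^ i * (2 * Real.pi *
          ((P.choose (N + 1) : ℝ) * |ρ| ^ e2))
        = 2 * Real.pi * ((((N - 2).choose i : ℝ) * (P.choose (N + 1) : ℝ)) *
            (|ρ| ^ i * |ρ| ^ e2)) := by ring
      _ ≤ 2 * Real.pi * ((2 ^ K * (N : ℝ) ^ K) * r) := by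
          refine mul_le_mul_of_nonneg_left ?_ (by positivity)
          exact mul_le_mul hchooseR hrho (by positivity) (by positivity)
      _ = B := by rw [hB_def]
  -- terms outside the filter vanish
  have hvanish : ∀ i ∈ range (N - 1), f i ≠ 0 → (N : ℤ) + 1 ≤ (i : ℤ) + (k + 1) := by
    intro i _ hne
    by_contra hcon
    apply hne
    rw [hf_def]
    by_cases hik0 : 0 ≤ (i : ℤ) + (k + 1)
    · simp only [if_pos hik0]
      have hlt : ((i : ℤ) + (k + 1)).toNat < N + 1 := by omega
      rw [Nat.choose_eq_zero_of_lt hlt]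
      simp
    · simp only [if_neg hik0]
      simp
  have hsum : ‖∑ i ∈ range (N - 1), f i‖ ≤ (K : ℝ) * B := by
    calc ‖∑ i ∈ range (N - 1), f i‖ ≤ ∑ i ∈ range (N - 1), ‖f i‖ := norm_sum_le _ _
      _ = ∑ i ∈ (range (N - 1)).filter (fun i : ℕ => (N : ℤ) + 1 ≤ (i : ℤ) + (k + 1)), ‖f i‖ := by
          rw [Finset.sum_filter_of_ne]
          intro i hi hne
          exact hvanish i hi fun h => hne (by rw [h, norm_zero])
      _ ≤ ((range (N - 1)).filter (fun i : ℕ => (N : ℤ) + 1 ≤ (i : ℤ) + (k + 1))).card • B :=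
          Finset.sum_le_card_nsmul _ _ _ hterm
      _ ≤ (K : ℝ) * B := by
          rw [nsmul_eq_mul]
          refine mul_le_mul_of_nonneg_right ?_ hB0
          have hsub : (range (N - 1)).filter (fun i : ℕ => (N : ℤ) + 1 ≤ (i : ℤ) + (k + 1)) ⊆
              Finset.Ico (((N : ℤ) - k).toNat) (N - 1) := by
            intro i hi
            rw [Finset.mem_filter, Finset.mem_range] at hi
            rw [Finset.mem_Ico]
            exact ⟨by omega, hi.1⟩
          have hcard := Finset.card_le_card hsub
          rw [Nat.card_Ico] at hcard
          have hfin : ((range (N - 1)).filter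
              (fun i : ℕ => (N : ℤ) + 1 ≤ (i : ℤ) + (k + 1))).card ≤ K := by omega
          exact_mod_cast hfin
  rw [hform, norm_mul, norm_mul, hpre2]
  calc ‖(1 - (ρ : ℂ) ^ 2) ^ 2‖ * (1 / (2 * Real.pi)) * ‖∑ i ∈ range (N - 1), f i‖
      ≤ 1 * (1 / (2 * Real.pi)) * ((K : ℝ) * B) := by
        refine mul_le_mul (mul_le_mul_of_nonneg_right hpre1 (by positivity)) hsum
          (norm_nonneg _) (by positivity)
    _ = ((K : ℝ) * 2 ^ K) * (N : ℝ) ^ K * r := by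
        rw [hB_def]
        field_simp

lemma muCoef_symm (ρ : ℝ) (hρ : |ρ| < 1) (n k : ℤ) :
    muCoef ρ n k = muCoef ρ (-n) (-k) := by
  rw [muCoef, muCoef]
  congr 1
  rw [circleIntegral_inv
    (fun z => (1 + (ρ : ℂ) * z) ^ (n - 2) * (z + (ρ : ℂ)) ^ (-(n + 2)) * z ^ (k + 1))]
  refine circleIntegral.integral_congr one_pos.le fun z hz => ?_
  have hz0 : z ≠ 0 := ne_zero_on_sphere hz
  have hzn : ‖z‖ = 1 := by simpa [mem_sphere_iff_norm] using hz
  have hρc : ‖(-(ρ : ℂ) : ℂ)‖ < 1 := by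
    rwa [norm_neg, Complex.norm_real, Real.norm_eq_abs]
  have hv : z + (ρ : ℂ) ≠ 0 := by
    have := sub_ne_zero_on_sphere hρc hz
    rwa [sub_neg_eq_add] at this
  have hu : (1 : ℂ) + (ρ : ℂ) * z ≠ 0 := by
    have h1 := one_sub_mul_ne (a := -(ρ : ℂ)) hρc (le_of_eq hzn)
    intro h; apply h1; rw [← h]; ring
  have h1 : (1 : ℂ) + (ρ : ℂ) * z⁻¹ = z⁻¹ * (z + (ρ : ℂ)) := by
    field_simp
  have h2 : z⁻¹ + (ρ : ℂ) = z⁻¹ * (1 + (ρ : ℂ) * z) := by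
    field_simp
  have hinv : ∀ m : ℤ, (z⁻¹ : ℂ) ^ m = z ^ (-m) := fun m => by
    rw [inv_zpow, ← zpow_neg]
  rw [h1, h2, mul_zpow, mul_zpow, hinv, hinv, hinv]
  rw [show (- -(n + 2)) = n + 2 by ring]
  calc z ^ (-2 : ℤ) * (z ^ (-(n - 2)) * (z + (ρ : ℂ)) ^ (n - 2) *
        (z ^ (n + 2) * (1 + (ρ : ℂ) * z) ^ (-(n + 2))) * z ^ (-(k + 1)))
      = (z ^ (-2 : ℤ) * z ^ (-(n - 2)) * z ^ (n + 2) * z ^ (-(k + 1))) *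
        ((z + (ρ : ℂ)) ^ (n - 2) * (1 + (ρ : ℂ) * z) ^ (-(n + 2))) := by ring
    _ = z ^ ((-2 : ℤ) + -(n - 2) + (n + 2) + -(k + 1)) *
        ((z + (ρ : ℂ)) ^ (n - 2) * (1 + (ρ : ℂ) * z) ^ (-(n + 2))) := by
        rw [← zpow_add₀ hz0, ← zpow_add₀ hz0, ← zpow_add₀ hz0]
    _ = (1 + (ρ : ℂ) * z) ^ (-n - 2) * (z + (ρ : ℂ)) ^ (-(-n + 2)) * z ^ (-k + 1) := by
        rw [show (-2 : ℤ) + -(n - 2) + (n + 2) + -(k + 1) = -k + 1 by ring,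
          show -n - 2 = -(n + 2) by ring, show -(-n + 2) = n - 2 by ring]
        ring

end MuAux

/-- Estimate on the transition coefficients: for every `k` with `|k| ≥ 1`
there is `C_k > 0` with `|μ_{nk}(ρ)| ≤ C_k |n|^{|k|} |ρ|^{|n|/2}` whenever
`ρ ∈ (−1,1)` and `|n| ≥ 2|k|`. -/
theorem muCoef_estimate (k : ℤ) (hk : 1 ≤ |k|) :
    ∃ C : ℝ, 0 < C ∧ ∀ ρ ∈ Set.Ioo (-1 : ℝ) 1, ∀ n : ℤ, 2 * |k| ≤ |n| →
      ‖muCoef ρ n k‖ ≤ C * ((|n| : ℝ) ^ (|k|.toNat)) * |ρ| ^ (((|n| : ℤ) : ℝ) / 2) := by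
  have habsk : ((|k|.toNat : ℤ)) = |k| := Int.toNat_of_nonneg (abs_nonneg k)
  have hKpos : 0 < (|k|.toNat : ℝ) := by
    have h1 : 1 ≤ |k|.toNat := by omega
    exact_mod_cast h1
  refine ⟨(|k|.toNat : ℝ) * 2 ^ |k|.toNat, by positivity, ?_⟩
  intro ρ hρ n hn
  have hρabs : |ρ| < 1 := abs_lt.mpr ⟨hρ.1, hρ.2⟩
  rcases le_or_gt 0 n with h | h
  · have habs : |n| = ((n.toNat : ℕ) : ℤ) := by
      rw [abs_of_nonneg h, Int.toNat_of_nonneg h]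
    have hn' : n = ((n.toNat : ℕ) : ℤ) := (Int.toNat_of_nonneg h).symm
    rw [habs]
    rw [show muCoef ρ n k = muCoef ρ ((n.toNat : ℕ) : ℤ) k by rw [← hn']]
    rw [show |(n : ℝ)| = ((n.toNat : ℕ) : ℝ) by
      rw [← Int.cast_abs, habs, Int.cast_natCast]]
    simp only [Int.cast_natCast]
    exact MuAux.core_bound k hk ρ hρ n.toNat (by rw [← habs]; exact hn)
  · have habs : |n| = (((-n).toNat : ℕ) : ℤ) := by
      rw [abs_of_neg h, Int.toNat_of_nonneg (by omega : (0:ℤ) ≤ -n)]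
    rw [MuAux.muCoef_symm ρ hρabs n k, habs]
    rw [show muCoef ρ (-n) (-k) = muCoef ρ (((-n).toNat : ℕ) : ℤ) (-k) by
      rw [Int.toNat_of_nonneg (by omega : (0:ℤ) ≤ -n)]]
    rw [show |(n : ℝ)| = (((-n).toNat : ℕ) : ℝ) by
      rw [← Int.cast_abs, habs, Int.cast_natCast]]
    simp only [Int.cast_natCast]
    have hres := MuAux.core_bound (-k) (by rwa [abs_neg]) ρ hρ (-n).toNat
      (by rw [abs_neg, ← habs]; exact hn)
    rwa [abs_neg] at hres
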